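/- Let A, D ∈ ℝ³ with |A| = |D| = 1 and the triangle OAD isoceles with angle OAD = angle ODA = π/3 (so angle AOD = π/6, O the origin is excluded from curves). Any curve γ in ℝ³ ∖ {O} joining A and D whose projection (by rotation about the axis OA onto the plane of angle AOD) meets the segment [4A, 4D] has length at least 2·(4·sin(π/3) − 1) = 2(2√3 − 1) > 4. -/

import Mathlib

open Set Real

/-- let `A, D ∈ ℝ³` with `|A| = |D| = 1` and angle `AOD = π/6` at the
origin `O`. Any curve `γ` in `ℝ³ ∖ {O}` joining `A` and `D` whose projection `Proj`
(the rotation about the axis `OA` onto the plane of the angle `AOD`, a norm-preserving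
map) meets the segment `[4A, 4D]` has length at least `2·(4·sin(π/3) − 1) = 2(2√3 − 1) > 4`. -/
theorem stmt10 (A D : EuclideanSpace ℝ (Fin 3)) (hA : ‖A‖ = 1) (hD : ‖D‖ = 1)
    (hAOD : InnerProductGeometry.angle A D = π / 6)
    (Proj : EuclideanSpace ℝ (Fin 3) → EuclideanSpace ℝ (Fin 3))
    (hProj : ∀ x, ‖Proj x‖ = ‖x‖)
    (γ : ℝ → EuclideanSpace ℝ (Fin 3)) (hγ : ContinuousOn γ (Icc 0 1))
    (h0 : γ 0 = A) (h1 : γ 1 = D) (hne : ∀ t ∈ Icc (0:ℝ) 1, γ t ≠ 0)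
    (hmeet : ∃ t ∈ Icc (0:ℝ) 1, Proj (γ t) ∈ segment ℝ ((4:ℝ) • A) ((4:ℝ) • D)) :
    ENNReal.ofReal (2 * (2 * Real.sqrt 3 - 1)) ≤ eVariationOn γ (Icc (0:ℝ) 1) ∧
    2 * (4 * Real.sin (π / 3) - 1) = 2 * (2 * Real.sqrt 3 - 1) ∧
    (4 : ℝ) < 2 * (2 * Real.sqrt 3 - 1) := by
  have hs3 : Real.sqrt 3 ^ 2 = 3 := Real.sq_sqrt (by norm_num)
  have hs3nn : (0:ℝ) ≤ Real.sqrt 3 := Real.sqrt_nonneg 3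
  obtain ⟨t, ht, hseg⟩ := hmeet
  -- inner product of A and D
  have hcos : Real.cos (InnerProductGeometry.angle A D)
      = inner ℝ A D / (‖A‖ * ‖D‖) := InnerProductGeometry.cos_angle A D
  have hinner : (inner ℝ A D : ℝ) = Real.sqrt 3 / 2 := by
    rw [hAOD, hA, hD, Real.cos_pi_div_six] at hcos
    linarith [hcos]
  -- norm of the point on the segment
  obtain ⟨a, b, ha, hb, hab, heq⟩ := hseg
  have hvsq : ‖γ t‖ ^ 2 = 16 * (a ^ 2 + b ^ 2 + Real.sqrt 3 * (a * b)) := by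
    have h1 : ‖γ t‖ = ‖a • ((4:ℝ) • A) + b • ((4:ℝ) • D)‖ := by
      rw [← hProj (γ t), heq]
    rw [h1, norm_add_sq_real]
    rw [smul_smul, smul_smul, norm_smul, norm_smul, real_inner_smul_left,
      real_inner_smul_right, hinner, hA, hD]
    rw [Real.norm_eq_abs, Real.norm_eq_abs, abs_of_nonneg (by linarith),
      abs_of_nonneg (by linarith)]
    ring
  have hnormsq : 12 ≤ ‖γ t‖ ^ 2 := by
    rw [hvsq]
    nlinarith [sq_nonneg (a - b), sq_nonneg (a + b), mul_nonneg ha hb,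
      mul_nonneg (mul_nonneg hs3nn ha) hb, sq_nonneg (Real.sqrt 3 - 1)]
  have hnorm : 2 * Real.sqrt 3 ≤ ‖γ t‖ := by
    nlinarith [norm_nonneg (γ t), sq_nonneg (‖γ t‖ - 2 * Real.sqrt 3)]
  refine ⟨?_, ?_, ?_⟩
  · -- variation bound
    have hkey := eVariationOn.Icc_add_Icc γ (s := Icc (0:ℝ) 1) ht.1 ht.2 ht
    have hint1 : Icc (0:ℝ) 1 ∩ Icc 0 t = Icc 0 t := by
      rw [Icc_inter_Icc]; simp [ht.2]
    have hint2 : Icc (0:ℝ) 1 ∩ Icc t 1 = Icc t 1 := by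
      rw [Icc_inter_Icc]; simp [ht.1]
    have hint3 : Icc (0:ℝ) 1 ∩ Icc 0 1 = Icc 0 1 := by simp
    rw [hint1, hint2, hint3] at hkey
    have e1 : edist (γ 0) (γ t) ≤ eVariationOn γ (Icc 0 t) :=
      eVariationOn.edist_le γ (left_mem_Icc.2 ht.1) (right_mem_Icc.2 ht.1)
    have e2 : edist (γ t) (γ 1) ≤ eVariationOn γ (Icc t 1) :=
      eVariationOn.edist_le γ (left_mem_Icc.2 ht.2) (right_mem_Icc.2 ht.2)
    have hle : ENNReal.ofReal (2 * (2 * Real.sqrt 3 - 1))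
        ≤ edist (γ 0) (γ t) + edist (γ t) (γ 1) := by
      rw [edist_dist, edist_dist, ← ENNReal.ofReal_add dist_nonneg dist_nonneg]
      apply ENNReal.ofReal_le_ofReal
      have d1 : ‖γ t‖ - 1 ≤ dist (γ 0) (γ t) := by
        rw [dist_eq_norm, h0]
        have := norm_sub_norm_le (γ t) A
        rw [hA] at this
        calc ‖γ t‖ - 1 ≤ ‖γ t - A‖ := by linarith
          _ = ‖A - γ t‖ := by rw [norm_sub_rev]
      have d2 : ‖γ t‖ - 1 ≤ dist (γ t) (γ 1) := by
        rw [dist_eq_norm, h1]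
        have := norm_sub_norm_le (γ t) D
        rw [hD] at this
        linarith
      linarith
    calc ENNReal.ofReal (2 * (2 * Real.sqrt 3 - 1))
        ≤ edist (γ 0) (γ t) + edist (γ t) (γ 1) := hle
      _ ≤ eVariationOn γ (Icc 0 t) + eVariationOn γ (Icc t 1) := add_le_add e1 e2
      _ = eVariationOn γ (Icc 0 1) := hkey
  · rw [Real.sin_pi_div_three]; ring
  · nlinarith
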